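/- arXiv:math/0210319 — 2 statements merged into one kernel-verified Lean document; each statement's English description precedes it below -/
import Mathlib

section
/- For θ > 0 and any composition λ = (λ_1,...,λ_ℓ) of n, the product ∏_{j=1}^ℓ q(Λ_j : λ_j), with q(n:m) = (θ/n)·(n!/(n-m)!)·[θ]_{n-m}/[θ]_n and Λ_j = λ_j + ... + λ_ℓ, equals the ordered Ewens formula e(λ) = θ^ℓ · n!/[θ]_n · ∏_{j=1}^ℓ 1/Λ_j. -/
noncomputable def risingFact (x : ℝ) (k : ℕ) : ℝ := ∏ i ∈ Finset.range k, (x + i)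

noncomputable def qESF (θ : ℝ) (n m : ℕ) : ℝ :=
  (θ / n) * ((n.factorial : ℝ) / ((n - m).factorial : ℝ)) *
    (risingFact θ (n - m) / risingFact θ n)

lemma risingFact_pos (θ : ℝ) (hθ : 0 < θ) (k : ℕ) : 0 < risingFact θ k := by
  apply Finset.prod_pos
  intro i _
  positivity

lemma aux_list (θ : ℝ) (hθ : 0 < θ) :
    ∀ L : List ℕ, (∀ x ∈ L, 0 < x) →
      (∏ j : Fin L.length, qESF θ ((L.drop j).sum) (L.get j))
        = (θ ^ L.length * ((L.sum.factorial : ℝ)) / risingFact θ L.sum) *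
            ∏ j ∈ Finset.range L.length, (((L.drop j).sum : ℝ))⁻¹ := by
  intro L
  induction L with
  | nil =>
    intro _
    simp [risingFact]
  | cons a t ih =>
    intro hpos
    have ht : ∀ x ∈ t, 0 < x := fun x hx => hpos x (List.mem_cons_of_mem a hx)
    have ha : 0 < a := hpos a (List.mem_cons_self (a := a) (l := t))
    simp only [List.length_cons]
    rw [Fin.prod_univ_succ]
    have hstep : (∏ j : Fin t.length,
        qESF θ ((List.drop (((j.succ : Fin (t.length + 1)) : ℕ)) (a :: t)).sum)
          ((a :: t).get j.succ))
        = ∏ j : Fin t.length, qESF θ ((t.drop j).sum) (t.get j) := by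
      apply Finset.prod_congr rfl
      intro j _
      rfl
    rw [hstep, ih ht]
    have hrange : (∏ j ∈ Finset.range (t.length + 1), ((((a :: t).drop j).sum : ℝ))⁻¹)
        = ((((a :: t).sum : ℝ))⁻¹) * ∏ j ∈ Finset.range t.length, (((t.drop j).sum : ℝ))⁻¹ := by
      rw [Finset.prod_range_succ']
      simp [mul_comm]
    rw [hrange]
    have hNsub : a + t.sum - a = t.sum := by omega
    have h0 : qESF θ ((List.drop (((0 : Fin (t.length + 1)) : ℕ)) (a :: t)).sum)
        ((a :: t).get (0 : Fin (t.length + 1))) = qESF θ (a + t.sum) a := by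
      simp
    rw [h0]
    unfold qESF
    rw [hNsub]
    have hsum : (a :: t).sum = a + t.sum := by simp
    rw [hsum]
    set N : ℝ := ((a + t.sum : ℕ) : ℝ) with hN
    have hN0 : N ≠ 0 := Nat.cast_ne_zero.mpr (by omega)
    have hfac : ((t.sum.factorial : ℝ)) ≠ 0 := by positivity
    have hrf : risingFact θ t.sum ≠ 0 := ne_of_gt (risingFact_pos θ hθ _)
    have hrfN : risingFact θ (a + t.sum) ≠ 0 := ne_of_gt (risingFact_pos θ hθ _)
    set P := ∏ j ∈ Finset.range t.length, (((t.drop j).sum : ℝ))⁻¹ with hP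
    field_simp
    ring

theorem product_form_eq_orderedESF (θ : ℝ) (hθ : 0 < θ) (n : ℕ) (hn : 1 ≤ n)
    (c : Composition n) :
    (∏ j : Fin c.length, qESF θ ((c.blocks.drop j).sum) (c.blocksFun j))
      = (θ ^ c.length * (n.factorial : ℝ) / risingFact θ n) *
          ∏ j ∈ Finset.range c.length, (((c.blocks.drop j).sum : ℝ))⁻¹ := by
  have h := aux_list θ hθ c.blocks (fun x hx => c.blocks_pos hx)
  have hlen : c.blocks.length = c.length := rfl
  have hsum : c.blocks.sum = n := c.blocks_sum
  have hbf : ∀ j : Fin c.length, c.blocksFun j = c.blocks.get j := fun j => rfl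
  rw [hsum] at h
  simpa [Composition.blocksFun, hlen] using h
end

section
/- For θ > 0 and n ≥ 1, the function e on compositions of n defined by e(λ) = θ^ℓ · n!/[θ]_n · ∏_{j=1}^ℓ 1/Λ_j satisfies the recursion e(λ_1,...,λ_ℓ) = (w(n:λ_1)/(1 - w(n:0))) · e(λ_2,...,λ_ℓ), where w(n:m) = θ·C(n,m)·B(m+1, n-m+θ) and n = Λ_1. -/
noncomputable def betaFn (a b : ℝ) : ℝ := ∫ t in (0:ℝ)..1, t ^ (a - 1) * (1 - t) ^ (b - 1)

noncomputable def w (θ : ℝ) (n m : ℕ) : ℝ :=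
  θ * (n.choose m : ℝ) * betaFn ((m : ℝ) + 1) ((n : ℝ) - (m : ℝ) + θ)

/-- ordered ESF as a function of the list of parts -/
noncomputable def eFun (θ : ℝ) (l : List ℕ) : ℝ :=
  θ ^ l.length * (l.sum.factorial : ℝ) / risingFact θ l.sum *
    ∏ j ∈ Finset.range l.length, (((l.drop j).sum : ℝ))⁻¹

lemma risingFact_pos_s4 {x : ℝ} (hx : 0 < x) (k : ℕ) : 0 < risingFact x k := by
  apply Finset.prod_pos
  intro i _
  positivity

lemma betaFn_ofReal (a b : ℝ) : (betaFn a b : ℂ) = Complex.betaIntegral a b := by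
  rw [betaFn, Complex.betaIntegral, ← intervalIntegral.integral_ofReal]
  apply intervalIntegral.integral_congr
  intro x hx
  rw [Set.uIcc_of_le (by norm_num : (0:ℝ) ≤ 1)] at hx
  obtain ⟨h0, h1⟩ := hx
  show ((x ^ (a - 1) * (1 - x) ^ (b - 1) : ℝ) : ℂ) = _
  rw [Complex.ofReal_mul, Complex.ofReal_cpow h0, Complex.ofReal_cpow (by linarith : (0:ℝ) ≤ 1 - x)]
  push_cast
  ring

lemma betaFn_eq (m : ℕ) {c : ℝ} (hc : 0 < c) :
    betaFn ((m : ℝ) + 1) c = (m.factorial : ℝ) / risingFact c (m + 1) := by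
  have h1 : (betaFn ((m : ℝ) + 1) c : ℂ) = Complex.betaIntegral c ((m : ℂ) + 1) := by
    rw [betaFn_ofReal, Complex.betaIntegral_symm]
    push_cast; ring_nf
  rw [Complex.betaIntegral_eval_nat_add_one_right (by simpa using hc) m] at h1
  have h2 : ((m.factorial : ℝ) / risingFact c (m + 1) : ℂ) =
      (m.factorial : ℂ) / ∏ j ∈ Finset.range (m + 1), ((c : ℂ) + j) := by
    rw [risingFact]
    push_cast
    ring
  exact_mod_cast h1.trans h2.symm

lemma risingFact_add (x : ℝ) (m k : ℕ) :
    risingFact x (m + k) = risingFact x m * risingFact (x + m) k := by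
  rw [risingFact, risingFact, risingFact, Finset.prod_range_add]
  congr 1
  apply Finset.prod_congr rfl
  intro i _
  push_cast
  ring

theorem orderedESF_recursion (θ : ℝ) (hθ : 0 < θ) (a : ℕ) (ha : 0 < a) (t : List ℕ)
    (ht : ∀ x ∈ t, 0 < x) :
    eFun θ (a :: t) = (w θ (a + t.sum) a / (1 - w θ (a + t.sum) 0)) * eFun θ t := by
  set s := t.sum with hs
  set n := a + s with hn
  have hnpos : 0 < n := by omega
  have hnθ : (0:ℝ) < (n:ℝ) + θ := by positivity
  -- w at 0
  have hw0 : w θ n 0 = θ / ((n:ℝ) + θ) := by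
    rw [w]
    have h := betaFn_eq 0 (c := (n:ℝ) - 0 + θ) (by linarith)
    norm_num at h ⊢
    rw [h, risingFact]
    norm_num
    rw [div_eq_mul_inv]
  have hw0' : 1 - w θ n 0 = (n:ℝ) / ((n:ℝ) + θ) := by
    rw [hw0]
    field_simp
    ring
  -- w at a
  have hcs : (n:ℝ) - (a:ℝ) + θ = (s:ℝ) + θ := by
    rw [hn]; push_cast; ring
  have hwa : w θ n a = θ * (n.choose a : ℝ) * (a.factorial : ℝ)
      / (risingFact ((s:ℝ) + θ) a * ((n:ℝ) + θ)) := by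
    rw [w, hcs, betaFn_eq a (by have : (0:ℝ) ≤ (s:ℝ) := Nat.cast_nonneg s; linarith), risingFact, Finset.prod_range_succ,
      ← risingFact]
    have : (s:ℝ) + θ + (a:ℕ) = (n:ℝ) + θ := by rw [hn]; push_cast; ring
    rw [this]
    ring
  -- rising factorial split
  have hRF : risingFact θ n = risingFact θ s * risingFact ((s:ℝ) + θ) a := by
    have : n = s + a := by omega
    rw [this, risingFact_add, add_comm θ (s:ℝ)]
  -- factorial split
  have hfac : (n.factorial : ℝ) = (n.choose a : ℝ) * (a.factorial : ℝ) * (s.factorial : ℝ) := by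
    have h := Nat.choose_mul_factorial_mul_factorial (show a ≤ n by omega)
    have h2 : n - a = s := by omega
    rw [h2] at h
    exact_mod_cast h.symm
  -- product split
  have hprod : ∏ j ∈ Finset.range (t.length + 1), ((((a :: t).drop j).sum : ℝ))⁻¹
      = ((n:ℝ))⁻¹ * ∏ j ∈ Finset.range t.length, (((t.drop j).sum : ℝ))⁻¹ := by
    rw [Finset.prod_range_succ']
    simp only [List.drop_succ_cons, List.drop_zero, List.sum_cons]
    rw [mul_comm]
  -- nonzero facts
  have hA : risingFact θ s ≠ 0 := (risingFact_pos_s4 hθ s).ne'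
  have hB : risingFact ((s:ℝ) + θ) a ≠ 0 := (risingFact_pos_s4 (by positivity) a).ne'
  have hnne : ((n:ℝ)) ≠ 0 := by positivity
  have key : θ ^ (t.length + 1) * (n.factorial : ℝ) / risingFact θ n * ((n:ℝ))⁻¹
      = (w θ n a / (1 - w θ n 0)) * (θ ^ t.length * (s.factorial : ℝ) / risingFact θ s) := by
    rw [hw0', hwa, hRF, hfac]
    field_simp
    ring
  rw [eFun, eFun]
  simp only [List.length_cons, List.sum_cons, ← hs, ← hn]
  rw [hprod]
  calc θ ^ (t.length + 1) * (n.factorial : ℝ) / risingFact θ n *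
        (((n:ℝ))⁻¹ * ∏ j ∈ Finset.range t.length, (((t.drop j).sum : ℝ))⁻¹)
      = (θ ^ (t.length + 1) * (n.factorial : ℝ) / risingFact θ n * ((n:ℝ))⁻¹) *
        ∏ j ∈ Finset.range t.length, (((t.drop j).sum : ℝ))⁻¹ := by ring
    _ = ((w θ n a / (1 - w θ n 0)) * (θ ^ t.length * (s.factorial : ℝ) / risingFact θ s)) *
        ∏ j ∈ Finset.range t.length, (((t.drop j).sum : ℝ))⁻¹ := by rw [key]
    _ = _ := by ring
end
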